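/- Second operator product formula: H_n(x,s,q) = (x − q s D_q)(x − q³ s D_q)···(x − q^{2n−1} s D_q) applied to 1. -/

import Mathlib

noncomputable section

/-- The q-integer `[n]_q = (1 - q^n)/(1 - q)`. -/
def qnat (q : ℝ) (n : ℕ) : ℝ := (1 - q ^ n) / (1 - q)

/-- The q-factorial `[n]_q!`. -/
def qfac (q : ℝ) (n : ℕ) : ℝ := ∏ j ∈ Finset.range n, qnat q (j + 1)

/-- The Gaussian binomial coefficient. -/
def qbinom (q : ℝ) (n k : ℕ) : ℝ := qfac q n / (qfac q k * qfac q (n - k))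

/-- The odd q-double factorial `[2k-1]_q!! = [1]_q [3]_q ⋯ [2k-1]_q`. -/
def qdf (q : ℝ) (k : ℕ) : ℝ := ∏ i ∈ Finset.range k, qnat q (2 * i + 1)

/-- The bivariate q-Hermite polynomial
`H n (x,s,q) = ∑_{2k ≤ n} (-s)^k q^(k²) qbinom(n,2k) [2k-1]_q!! x^(n-2k)`. -/
def qHermite (q s : ℝ) (n : ℕ) (x : ℝ) : ℝ :=
  ∑ k ∈ Finset.range (n / 2 + 1),
    (-s) ^ k * q ^ (k ^ 2) * qbinom q n (2 * k) * qdf q k * x ^ (n - 2 * k)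

open Polynomial

/-- The q-Hermite polynomial as an element of `ℝ[X]` (variable `x`). -/
def qHermitePoly (q s : ℝ) (n : ℕ) : Polynomial ℝ :=
  ∑ k ∈ Finset.range (n / 2 + 1),
    C ((-s) ^ k * q ^ (k ^ 2) * qbinom q n (2 * k) * qdf q k) * X ^ (n - 2 * k)

/-- The q-derivative on polynomials, determined by `D_q x^m = [m]_q x^(m-1)`. -/
def qDeriv (q : ℝ) (p : Polynomial ℝ) : Polynomial ℝ :=
  p.sum fun m a => C (a * qnat q m) * X ^ (m - 1)

/-- Apply the operators `(x - q^i s D_q)` for the exponents `i` in the list `l`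
(rightmost factor = last element of `l` acts first) to the constant polynomial 1. -/
def qOpProd (q s : ℝ) (l : List ℕ) : Polynomial ℝ :=
  l.foldr (fun i p => X * p - C (q ^ i * s) * qDeriv q p) 1

end

open Polynomial Finset

section lemmas

variable {q : ℝ}

lemma one_sub_q_ne (hq : 0 < q) (hq1 : q < 1) : (1:ℝ) - q ≠ 0 := by nlinarith

lemma qnat_zero_eq (q : ℝ) : qnat q 0 = 0 := by simp [qnat]

lemma qnat_one_eq (hq : 0 < q) (hq1 : q < 1) : qnat q 1 = 1 := by
  simp [qnat, div_self (one_sub_q_ne hq hq1)]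

lemma qnat_succ_pos (hq : 0 < q) (hq1 : q < 1) (m : ℕ) : 0 < qnat q (m + 1) := by
  have h1 : q ^ (m + 1) < 1 := pow_lt_one₀ hq.le hq1 (Nat.succ_ne_zero m)
  have h2 : (0:ℝ) < 1 - q := by linarith
  exact div_pos (by linarith) h2

lemma qnat_succ_ne (hq : 0 < q) (hq1 : q < 1) (m : ℕ) : qnat q (m + 1) ≠ 0 :=
  (qnat_succ_pos hq hq1 m).ne'

lemma qnat_pascal (hq : 0 < q) (hq1 : q < 1) (a b : ℕ) :
    qnat q (a + b) = q ^ a * qnat q b + qnat q a := by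
  unfold qnat
  rw [pow_add]
  field_simp
  ring

lemma qfac_zero_eq (q : ℝ) : qfac q 0 = 1 := by simp [qfac]

lemma qfac_one_eq (hq : 0 < q) (hq1 : q < 1) : qfac q 1 = 1 := by
  simp [qfac, qnat_one_eq hq hq1]

lemma qfac_succ (q : ℝ) (m : ℕ) : qfac q (m + 1) = qfac q m * qnat q (m + 1) := by
  simp [qfac, Finset.prod_range_succ]

lemma qfac_pos (hq : 0 < q) (hq1 : q < 1) (m : ℕ) : 0 < qfac q m :=
  Finset.prod_pos fun i _ => qnat_succ_pos hq hq1 i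

lemma qfac_ne (hq : 0 < q) (hq1 : q < 1) (m : ℕ) : qfac q m ≠ 0 :=
  (qfac_pos hq hq1 m).ne'

lemma qdf_succ (q : ℝ) (k : ℕ) : qdf q (k + 1) = qdf q k * qnat q (2 * k + 1) := by
  simp [qdf, Finset.prod_range_succ]

lemma qbinom_zero_eq (hq : 0 < q) (hq1 : q < 1) (n : ℕ) : qbinom q n 0 = 1 := by
  simp [qbinom, qfac_zero_eq, div_self (qfac_ne hq hq1 n)]

lemma qbinom_self_eq (hq : 0 < q) (hq1 : q < 1) (n : ℕ) : qbinom q n n = 1 := by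
  simp [qbinom, qfac_zero_eq, div_self (qfac_ne hq hq1 n)]

lemma qbinom_succ_self (hq : 0 < q) (hq1 : q < 1) (n : ℕ) :
    qbinom q (n + 1) n = qnat q (n + 1) := by
  unfold qbinom
  rw [show n + 1 - n = 1 by omega, qfac_one_eq hq hq1, qfac_succ]
  field_simp [qfac_ne hq hq1 n]

end lemmas

section star
variable {q : ℝ}

lemma star (hq : 0 < q) (hq1 : q < 1) (k r : ℕ) :
    qbinom q (2*k+3+r) (2*k+2) * qdf q (k+1)
      = q^(2*k+2) * (qbinom q (2*k+2+r) (2*k+2) * qdf q (k+1))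
        + qbinom q (2*k+2+r) (2*k) * qdf q k * qnat q (r+2) := by
  have e1 : qfac q (2*k+3+r) = qfac q (2*k+2+r) * qnat q (2*k+2+r+1) := by
    rw [show 2*k+3+r = (2*k+2+r)+1 by omega, qfac_succ]
  have hp : qnat q (2*k+2+r+1) = q^(2*k+2) * qnat q (r+1) + qnat q (2*k+2) := by
    have := qnat_pascal hq hq1 (2*k+2) (r+1)
    rw [show 2*k+2+(r+1) = 2*k+2+r+1 by omega] at this
    exact this
  have e2 : qfac q (2*k+2) = qfac q (2*k) * qnat q (2*k+1) * qnat q (2*k+2) := by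
    rw [show 2*k+2 = (2*k+1)+1 by omega, qfac_succ, show 2*k+1 = (2*k)+1 by omega, qfac_succ]
  have e3 : qfac q (r+1) = qfac q r * qnat q (r+1) := qfac_succ q r
  have e4 : qfac q (r+2) = qfac q r * qnat q (r+1) * qnat q (r+2) := by
    rw [show r+2 = (r+1)+1 by omega, qfac_succ, qfac_succ]
  have e5 : qdf q (k+1) = qdf q k * qnat q (2*k+1) := qdf_succ q k
  unfold qbinom
  rw [show 2*k+3+r - (2*k+2) = r+1 by omega, show 2*k+2+r - (2*k+2) = r by omega,
      show 2*k+2+r - 2*k = r+2 by omega, e1, hp, e2, e3, e4, e5]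
  have h1 := qfac_ne hq hq1 (2*k)
  have h2 := qfac_ne hq hq1 r
  have h3 := qfac_ne hq hq1 (2*k+2+r)
  have h4 := qnat_succ_ne hq hq1 (2*k)
  have h5 := qnat_succ_ne hq hq1 (2*k+1)
  have h6 := qnat_succ_ne hq hq1 r
  have h7 := qnat_succ_ne hq hq1 (r+1)
  rw [show (2*k:ℕ)+1+1 = 2*k+2 by omega] at h5
  rw [show r+1+1 = r+2 by omega] at h7
  field_simp

lemma coef_id (hq : 0 < q) (hq1 : q < 1) (s : ℝ) (k r : ℕ) :
    (-s)^(k+1) * q^((k+1)^2) * qbinom q (2*k+3+r) (2*k+2) * qdf q (k+1)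
      = (-(q^2*s))^(k+1) * q^((k+1)^2) * qbinom q (2*k+2+r) (2*k+2) * qdf q (k+1)
        - q*s*((-(q^2*s))^k * q^(k^2) * qbinom q (2*k+2+r) (2*k) * qdf q k * qnat q (r+2)) := by
  have h := star hq hq1 k r
  have hpw : ((k:ℕ)+1)^2 = k^2 + 2*k + 1 := by ring
  rw [hpw, pow_add, pow_add, show (-(q^2*s)) = (-s)*q^2 by ring]
  rw [mul_pow, mul_pow]
  linear_combination ((-s)^(k+1) * (q^(k^2) * q^(2*k) * q^1)) * h

lemma coef_bd (hq : 0 < q) (hq1 : q < 1) (s : ℝ) (m : ℕ) :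
    (-s)^(m+1) * q^((m+1)^2) * qbinom q (2*m+2) (2*m+2) * qdf q (m+1)
      = -(q*s*((-(q^2*s))^m * q^(m^2) * qbinom q (2*m+1) (2*m) * qdf q m * qnat q 1)) := by
  rw [qbinom_self_eq hq hq1, qnat_one_eq hq hq1, qdf_succ,
      show (2*m+1:ℕ) = (2*m)+1 by omega, qbinom_succ_self hq hq1]
  have hpw : ((m:ℕ)+1)^2 = m^2 + 2*m + 1 := by ring
  rw [hpw, pow_add, pow_add, show (-(q^2*s)) = (-s)*q^2 by ring, mul_pow]
  ring

end star

section deriv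
variable {q : ℝ}

lemma qDeriv_add (q : ℝ) (p r : Polynomial ℝ) :
    qDeriv q (p + r) = qDeriv q p + qDeriv q r := by
  unfold qDeriv
  apply Polynomial.sum_add_index
  · intro i; simp
  · intro a b₁ b₂; rw [add_mul, C_add, add_mul]

lemma qDeriv_sum {ι : Type*} (q : ℝ) (t : Finset ι) (f : ι → Polynomial ℝ) :
    qDeriv q (∑ i ∈ t, f i) = ∑ i ∈ t, qDeriv q (f i) :=
  map_sum (AddMonoidHom.mk' (qDeriv q) (qDeriv_add q)) f t

lemma qDeriv_monomial (q : ℝ) (e : ℕ) (a : ℝ) :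
    qDeriv q (monomial e a) = monomial (e - 1) (a * qnat q e) := by
  unfold qDeriv
  rw [Polynomial.sum_monomial_index, C_mul_X_pow_eq_monomial]
  simp

lemma X_mul_monomial' (e : ℕ) (a : ℝ) : X * monomial e a = monomial (e + 1) a := by
  rw [X_mul, monomial_mul_X]

lemma key (hq : 0 < q) (hq1 : q < 1) (s : ℝ) (n : ℕ) :
    qHermitePoly q s (n + 1)
      = X * qHermitePoly q (q ^ 2 * s) n
        - C (q * s) * qDeriv q (qHermitePoly q (q ^ 2 * s) n) := by
  have hH : ∀ (t : ℝ) (m : ℕ), qHermitePoly q t m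
      = ∑ k ∈ range (m / 2 + 1),
          monomial (m - 2 * k) ((-t) ^ k * q ^ (k ^ 2) * qbinom q m (2 * k) * qdf q k) := by
    intro t m
    unfold qHermitePoly
    simp only [C_mul_X_pow_eq_monomial]
  rw [hH, hH, qDeriv_sum]
  simp only [qDeriv_monomial, Finset.mul_sum, X_mul_monomial', C_mul_monomial]
  rcases Nat.even_or_odd n with h | h
  · obtain ⟨m, rfl⟩ := h
    rw [show (m + m + 1) / 2 + 1 = m + 1 by omega, show (m + m) / 2 + 1 = m + 1 by omega]
    have hB : (∑ x ∈ range (m+1), (monomial (m + m - 2*x + 1))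
          ((-(q^2*s))^x * q^(x^2) * qbinom q (m+m) (2*x) * qdf q x))
        = ∑ x ∈ range (m+1), (monomial (m + m + 1 - 2*x))
          ((-(q^2*s))^x * q^(x^2) * qbinom q (m+m) (2*x) * qdf q x) := by
      refine Finset.sum_congr rfl fun x hx => ?_
      have hx' := Finset.mem_range.mp hx
      rw [show m + m - 2*x + 1 = m + m + 1 - 2*x by omega]
    rw [hB]
    rw [Finset.sum_range_succ' (fun k => (monomial (m + m + 1 - 2*k))
        ((-s)^k * q^(k^2) * qbinom q (m+m+1) (2*k) * qdf q k)) m]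
    rw [Finset.sum_range_succ' (fun k => (monomial (m + m + 1 - 2*k))
        ((-(q^2*s))^k * q^(k^2) * qbinom q (m+m) (2*k) * qdf q k)) m]
    rw [Finset.sum_range_succ (fun k => (monomial (m + m - 2*k - 1))
        (q*s*((-(q^2*s))^k * q^(k^2) * qbinom q (m+m) (2*k) * qdf q k * qnat q (m + m - 2*k)))) m]
    have h4 : (monomial (m + m - 2*m - 1))
        (q*s*((-(q^2*s))^m * q^(m^2) * qbinom q (m+m) (2*m) * qdf q m * qnat q (m + m - 2*m)))
        = (0 : Polynomial ℝ) := by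
      rw [show m + m - 2*m = 0 by omega, qnat_zero_eq]
      simp
    have h0 : (monomial (m + m + 1 - 2*0)) ((-s)^0 * q^(0^2) * qbinom q (m+m+1) (2*0) * qdf q 0)
        = (monomial (m + m + 1 - 2*0)) ((-(q^2*s))^0 * q^(0^2) * qbinom q (m+m) (2*0) * qdf q 0) := by
      norm_num [qbinom_zero_eq hq hq1]
    have h1 : (∑ x ∈ range m, (monomial (m + m + 1 - 2*(x+1)))
          ((-s)^(x+1) * q^((x+1)^2) * qbinom q (m+m+1) (2*(x+1)) * qdf q (x+1)))
        = (∑ x ∈ range m, (monomial (m + m + 1 - 2*(x+1)))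
            ((-(q^2*s))^(x+1) * q^((x+1)^2) * qbinom q (m+m) (2*(x+1)) * qdf q (x+1)))
          - ∑ x ∈ range m, (monomial (m + m - 2*x - 1))
            (q*s*((-(q^2*s))^x * q^(x^2) * qbinom q (m+m) (2*x) * qdf q x * qnat q (m + m - 2*x))) := by
      rw [← Finset.sum_sub_distrib]
      refine Finset.sum_congr rfl fun x hx => ?_
      have hx' := Finset.mem_range.mp hx
      obtain ⟨r, hr⟩ : ∃ r, m + m = 2*x+2+2*r := ⟨m - x - 1, by omega⟩
      rw [hr]
      rw [show 2*x+2+2*r + 1 - 2*(x+1) = 2*r+1 by omega,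
          show 2*x+2+2*r - 2*x - 1 = 2*r+1 by omega,
          show 2*x+2+2*r - 2*x = 2*r+2 by omega,
          show 2*x+2+2*r + 1 = 2*x+3+2*r by omega,
          show 2*(x+1) = 2*x+2 by ring]
      rw [← map_sub]
      exact congrArg _ (coef_id hq hq1 s x (2*r))
    linear_combination h1 + h0 + h4
  · obtain ⟨m, rfl⟩ := h
    rw [show (2*m+1 + 1) / 2 + 1 = m + 2 by omega, show (2*m+1) / 2 + 1 = m + 1 by omega]
    have hB : (∑ x ∈ range (m+1), (monomial (2*m+1 - 2*x + 1))
          ((-(q^2*s))^x * q^(x^2) * qbinom q (2*m+1) (2*x) * qdf q x))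
        = ∑ x ∈ range (m+1), (monomial (2*m+1 + 1 - 2*x))
          ((-(q^2*s))^x * q^(x^2) * qbinom q (2*m+1) (2*x) * qdf q x) := by
      refine Finset.sum_congr rfl fun x hx => ?_
      have hx' := Finset.mem_range.mp hx
      rw [show 2*m+1 - 2*x + 1 = 2*m+1 + 1 - 2*x by omega]
    rw [hB]
    rw [Finset.sum_range_succ' (fun k => (monomial (2*m+1 + 1 - 2*k))
        ((-s)^k * q^(k^2) * qbinom q (2*m+1+1) (2*k) * qdf q k)) (m+1)]
    rw [Finset.sum_range_succ (fun k => (monomial (2*m+1 + 1 - 2*(k+1)))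
        ((-s)^(k+1) * q^((k+1)^2) * qbinom q (2*m+1+1) (2*(k+1)) * qdf q (k+1))) m]
    rw [Finset.sum_range_succ' (fun k => (monomial (2*m+1 + 1 - 2*k))
        ((-(q^2*s))^k * q^(k^2) * qbinom q (2*m+1) (2*k) * qdf q k)) m]
    rw [Finset.sum_range_succ (fun k => (monomial (2*m+1 - 2*k - 1))
        (q*s*((-(q^2*s))^k * q^(k^2) * qbinom q (2*m+1) (2*k) * qdf q k * qnat q (2*m+1 - 2*k)))) m]
    have h0 : (monomial (2*m+1 + 1 - 2*0)) ((-s)^0 * q^(0^2) * qbinom q (2*m+1+1) (2*0) * qdf q 0)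
        = (monomial (2*m+1 + 1 - 2*0)) ((-(q^2*s))^0 * q^(0^2) * qbinom q (2*m+1) (2*0) * qdf q 0) := by
      norm_num [qbinom_zero_eq hq hq1]
    have h2 : (monomial (2*m+1 + 1 - 2*(m+1)))
          ((-s)^(m+1) * q^((m+1)^2) * qbinom q (2*m+1+1) (2*(m+1)) * qdf q (m+1))
        = -(monomial (2*m+1 - 2*m - 1))
            (q*s*((-(q^2*s))^m * q^(m^2) * qbinom q (2*m+1) (2*m) * qdf q m * qnat q (2*m+1 - 2*m))) := by
      rw [show 2*m+1 + 1 - 2*(m+1) = 0 by omega, show 2*m+1 - 2*m - 1 = 0 by omega,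
          show 2*m+1 - 2*m = 1 by omega, show 2*m+1+1 = 2*m+2 by omega,
          show 2*(m+1) = 2*m+2 by ring]
      rw [← map_neg]
      exact congrArg _ (coef_bd hq hq1 s m)
    have h1 : (∑ x ∈ range m, (monomial (2*m+1 + 1 - 2*(x+1)))
          ((-s)^(x+1) * q^((x+1)^2) * qbinom q (2*m+1+1) (2*(x+1)) * qdf q (x+1)))
        = (∑ x ∈ range m, (monomial (2*m+1 + 1 - 2*(x+1)))
            ((-(q^2*s))^(x+1) * q^((x+1)^2) * qbinom q (2*m+1) (2*(x+1)) * qdf q (x+1)))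
          - ∑ x ∈ range m, (monomial (2*m+1 - 2*x - 1))
            (q*s*((-(q^2*s))^x * q^(x^2) * qbinom q (2*m+1) (2*x) * qdf q x * qnat q (2*m+1 - 2*x))) := by
      rw [← Finset.sum_sub_distrib]
      refine Finset.sum_congr rfl fun x hx => ?_
      have hx' := Finset.mem_range.mp hx
      obtain ⟨r, hr⟩ : ∃ r, 2*m+1 = 2*x+2+r := ⟨2*m - 2*x - 1, by omega⟩
      rw [hr]
      rw [show 2*x+2+r + 1 - 2*(x+1) = r+1 by omega,
          show 2*x+2+r - 2*x - 1 = r+1 by omega,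
          show 2*x+2+r - 2*x = r+2 by omega,
          show 2*x+2+r + 1 = 2*x+3+r by omega,
          show 2*(x+1) = 2*x+2 by ring]
      rw [← map_sub]
      exact congrArg _ (coef_id hq hq1 s x r)
    linear_combination h1 + h2 + h0
  

end deriv

section final
variable {q : ℝ}

lemma qOpProd_cons (q s : ℝ) (a : ℕ) (l : List ℕ) :
    qOpProd q s (a :: l) = X * qOpProd q s l - C (q ^ a * s) * qDeriv q (qOpProd q s l) := rfl

lemma qOpProd_shift (q s : ℝ) (l : List ℕ) :
    qOpProd q s (l.map (· + 2)) = qOpProd q (q ^ 2 * s) l := by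
  induction l with
  | nil => simp only [List.map_nil, qOpProd, List.foldr_nil]
  | cons a l ih =>
      rw [List.map_cons, qOpProd_cons, qOpProd_cons, ih,
        show q ^ (a + 2) * s = q ^ a * (q ^ 2 * s) by rw [pow_add]; ring]

lemma main (hq : 0 < q) (hq1 : q < 1) (n : ℕ) :
    ∀ s : ℝ, qHermitePoly q s n = qOpProd q s ((List.range n).map fun i => 2 * i + 1) := by
  induction n with
  | zero =>
      intro s
      simp [qHermitePoly, qOpProd, qbinom_zero_eq hq hq1, qdf]
  | succ n ih =>
      intro s
      rw [List.range_succ_eq_map, List.map_cons, List.map_map]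
      have hfn : ((fun i => 2 * i + 1) ∘ Nat.succ)
          = (fun i => i + 2) ∘ (fun i => 2 * i + 1) := by
        funext i
        simp [Function.comp]
        omega
      rw [hfn, ← List.map_map, show (2 : ℕ) * 0 + 1 = 1 by norm_num, qOpProd_cons]
      have hs : ((List.range n).map fun i => 2 * i + 1).map (fun i => i + 2)
          = ((List.range n).map fun i => 2 * i + 1).map (· + 2) := rfl
      rw [hs, qOpProd_shift, ← ih (q ^ 2 * s), pow_one, key hq hq1 s n]

end final


theorem qHermite_operator_product' (q : ℝ) (hq : 0 < q) (hq1 : q < 1) (s : ℝ) (n : ℕ) :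
    qHermitePoly q s n = qOpProd q s ((List.range n).map fun i => 2 * i + 1) := by
  exact main hq hq1 n s
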